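/- Any two distinct tropical lines in R^2 in general position (i.e. with distinct vertices (a,b), (a',b') such that a - a' ≠ b - b', a ≠ a', and b ≠ b') intersect in exactly one point. -/

import Mathlib

/-- The tropical line in `ℝ²` with vertex `(a,b)`: the union of the three rays from
`(a,b)` in directions `(-1,0)`, `(0,-1)` and `(1,1)`. -/
def tropLine (a b : ℝ) : Set (ℝ × ℝ) :=
  {P : ℝ × ℝ | ∃ t : ℝ, 0 ≤ t ∧ P = (a - t, b)}
    ∪ {P : ℝ × ℝ | ∃ t : ℝ, 0 ≤ t ∧ P = (a, b - t)}
    ∪ {P : ℝ × ℝ | ∃ t : ℝ, 0 ≤ t ∧ P = (a + t, b + t)}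

/-- Two tropical lines in general position (distinct vertices with
`a - a' ≠ b - b'`, `a ≠ a'`, `b ≠ b'`) intersect in exactly one point. -/
theorem tropical_lines_intersect_uniquely (a b a' b' : ℝ)
    (hvert : (a, b) ≠ (a', b')) (hd : a - a' ≠ b - b') (ha : a ≠ a') (hb : b ≠ b') :
    ∃! P : ℝ × ℝ, P ∈ tropLine a b ∩ tropLine a' b' := by
  have uniq : ∀ (x₀ y₀ : ℝ), (∀ x y : ℝ,
      (x, y) ∈ tropLine a b ∩ tropLine a' b' → x = x₀ ∧ y = y₀) →
      (x₀, y₀) ∈ tropLine a b ∩ tropLine a' b' →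
      ∃! P : ℝ × ℝ, P ∈ tropLine a b ∩ tropLine a' b' := by
    intro x₀ y₀ hu hmem
    refine ⟨(x₀, y₀), hmem, ?_⟩
    rintro ⟨x, y⟩ hxy
    obtain ⟨h1, h2⟩ := hu x y hxy
    simp [h1, h2]
  rcases lt_or_gt_of_ne ha with hA | hA <;> rcases lt_or_gt_of_ne hb with hB | hB
  · -- a < a', b < b'
    rcases lt_or_gt_of_ne hd with hD | hD
    · -- a - a' < b - b' : candidate (a + (b'-b), b')
      refine uniq (a + (b' - b)) b' ?_
        ⟨Or.inr ⟨b' - b, by linarith, by simp only [Prod.mk.injEq]; exact ⟨by first | trivial | ring, by first | trivial | ring⟩⟩,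
         Or.inl (Or.inl ⟨a' - a - (b' - b), by linarith,
           by simp only [Prod.mk.injEq]; exact ⟨by first | trivial | ring, by first | trivial | ring⟩⟩)⟩
      rintro x y ⟨hP1, hP2⟩
      rcases hP1 with (⟨t, ht, hPe⟩ | ⟨t, ht, hPe⟩) | ⟨t, ht, hPe⟩ <;>
        rcases hP2 with (⟨s, hs, hQe⟩ | ⟨s, hs, hQe⟩) | ⟨s, hs, hQe⟩ <;>
        simp only [Prod.mk.injEq] at hPe hQe <;>
        obtain ⟨he1, he2⟩ := hPe <;> obtain ⟨hf1, hf2⟩ := hQe <;>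
        constructor <;> linarith
    · -- a - a' > b - b' : candidate (a', b + (a'-a))
      refine uniq a' (b + (a' - a)) ?_
        ⟨Or.inr ⟨a' - a, by linarith, by simp only [Prod.mk.injEq]; exact ⟨by first | trivial | ring, by first | trivial | ring⟩⟩,
         Or.inl (Or.inr ⟨b' - b - (a' - a), by linarith,
           by simp only [Prod.mk.injEq]; exact ⟨by first | trivial | ring, by first | trivial | ring⟩⟩)⟩
      rintro x y ⟨hP1, hP2⟩
      rcases hP1 with (⟨t, ht, hPe⟩ | ⟨t, ht, hPe⟩) | ⟨t, ht, hPe⟩ <;>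
        rcases hP2 with (⟨s, hs, hQe⟩ | ⟨s, hs, hQe⟩) | ⟨s, hs, hQe⟩ <;>
        simp only [Prod.mk.injEq] at hPe hQe <;>
        obtain ⟨he1, he2⟩ := hPe <;> obtain ⟨hf1, hf2⟩ := hQe <;>
        constructor <;> linarith
  · -- a < a', b > b' : candidate (a, b')
    refine uniq a b' ?_
      ⟨Or.inl (Or.inr ⟨b - b', by linarith, by simp only [Prod.mk.injEq]; exact ⟨by first | trivial | ring, by first | trivial | ring⟩⟩),
       Or.inl (Or.inl ⟨a' - a, by linarith, by simp only [Prod.mk.injEq]; exact ⟨by first | trivial | ring, by first | trivial | ring⟩⟩)⟩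
    rintro x y ⟨hP1, hP2⟩
    rcases hP1 with (⟨t, ht, hPe⟩ | ⟨t, ht, hPe⟩) | ⟨t, ht, hPe⟩ <;>
      rcases hP2 with (⟨s, hs, hQe⟩ | ⟨s, hs, hQe⟩) | ⟨s, hs, hQe⟩ <;>
      simp only [Prod.mk.injEq] at hPe hQe <;>
      obtain ⟨he1, he2⟩ := hPe <;> obtain ⟨hf1, hf2⟩ := hQe <;>
      constructor <;> linarith
  · -- a > a', b < b' : candidate (a', b)
    refine uniq a' b ?_
      ⟨Or.inl (Or.inl ⟨a - a', by linarith, by simp only [Prod.mk.injEq]; exact ⟨by first | trivial | ring, by first | trivial | ring⟩⟩),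
       Or.inl (Or.inr ⟨b' - b, by linarith, by simp only [Prod.mk.injEq]; exact ⟨by first | trivial | ring, by first | trivial | ring⟩⟩)⟩
    rintro x y ⟨hP1, hP2⟩
    rcases hP1 with (⟨t, ht, hPe⟩ | ⟨t, ht, hPe⟩) | ⟨t, ht, hPe⟩ <;>
      rcases hP2 with (⟨s, hs, hQe⟩ | ⟨s, hs, hQe⟩) | ⟨s, hs, hQe⟩ <;>
      simp only [Prod.mk.injEq] at hPe hQe <;>
      obtain ⟨he1, he2⟩ := hPe <;> obtain ⟨hf1, hf2⟩ := hQe <;>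
      constructor <;> linarith
  · -- a > a', b > b'
    rcases lt_or_gt_of_ne hd with hD | hD
    · -- a - a' < b - b' : candidate (a, b' + (a - a'))
      refine uniq a (b' + (a - a')) ?_
        ⟨Or.inl (Or.inr ⟨b - b' - (a - a'), by linarith,
           by simp only [Prod.mk.injEq]; exact ⟨by first | trivial | ring, by first | trivial | ring⟩⟩),
         Or.inr ⟨a - a', by linarith, by simp only [Prod.mk.injEq]; exact ⟨by first | trivial | ring, by first | trivial | ring⟩⟩⟩
      rintro x y ⟨hP1, hP2⟩
      rcases hP1 with (⟨t, ht, hPe⟩ | ⟨t, ht, hPe⟩) | ⟨t, ht, hPe⟩ <;>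
        rcases hP2 with (⟨s, hs, hQe⟩ | ⟨s, hs, hQe⟩) | ⟨s, hs, hQe⟩ <;>
        simp only [Prod.mk.injEq] at hPe hQe <;>
        obtain ⟨he1, he2⟩ := hPe <;> obtain ⟨hf1, hf2⟩ := hQe <;>
        constructor <;> linarith
    · -- a - a' > b - b' : candidate (a' + (b - b'), b)
      refine uniq (a' + (b - b')) b ?_
        ⟨Or.inl (Or.inl ⟨a - a' - (b - b'), by linarith,
           by simp only [Prod.mk.injEq]; exact ⟨by first | trivial | ring, by first | trivial | ring⟩⟩),
         Or.inr ⟨b - b', by linarith, by simp only [Prod.mk.injEq]; exact ⟨by first | trivial | ring, by first | trivial | ring⟩⟩⟩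
      rintro x y ⟨hP1, hP2⟩
      rcases hP1 with (⟨t, ht, hPe⟩ | ⟨t, ht, hPe⟩) | ⟨t, ht, hPe⟩ <;>
        rcases hP2 with (⟨s, hs, hQe⟩ | ⟨s, hs, hQe⟩) | ⟨s, hs, hQe⟩ <;>
        simp only [Prod.mk.injEq] at hPe hQe <;>
        obtain ⟨he1, he2⟩ := hPe <;> obtain ⟨hf1, hf2⟩ := hQe <;>
        constructor <;> linarith
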